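/- For n ≥ 2 and 1 ≤ k ≤ n-1, the number of connected interval-clique graphs on {1,...,n} with exactly k maximal cliques equals (1/(n-1)) · C(n-1, k) · C(n-1, k-1). -/

import Mathlib

/-- Interval-clique property: whenever `i < j` are adjacent, `{i,...,j}` is a clique. -/
def IntervalClique {n : ℕ} (G : SimpleGraph (Fin n)) : Prop :=
  ∀ i j k l : Fin n, i < j → G.Adj i j → i ≤ k → k ≤ j → i ≤ l → l ≤ j → k ≠ l → G.Adj k l

/-- `s` is a maximal clique of `G`. -/
def IsMaxClique {n : ℕ} (G : SimpleGraph (Fin n)) (s : Finset (Fin n)) : Prop :=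
  G.IsClique (s : Set (Fin n)) ∧ ∀ t : Finset (Fin n), G.IsClique (t : Set (Fin n)) → s ⊆ t → s = t

/-- The number of maximal cliques of `G`. -/
noncomputable def numMaxCliques {n : ℕ} (G : SimpleGraph (Fin n)) : ℕ :=
  Nat.card {s : Finset (Fin n) // IsMaxClique G s}

open Finset

section IC
variable {n : ℕ}

/-- A "good" function: monotone, strictly above the diagonal except at the top. -/
def Good (f : Fin n → Fin n) : Prop :=
  Monotone f ∧ ∀ i : Fin n, (i : ℕ) + 1 < n → i < f i

/-- The graph associated to a function: `i ~ j` iff `max i j ≤ f (min i j)`. -/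
def graphOf (f : Fin n → Fin n) : SimpleGraph (Fin n) where
  Adj i j := i ≠ j ∧ max i j ≤ f (min i j)
  symm := by
    constructor
    intro i j h
    refine ⟨h.1.symm, ?_⟩
    rw [max_comm, min_comm]; exact h.2
  loopless := ⟨fun i h => h.1 rfl⟩

lemma graphOf_adj {f : Fin n → Fin n} {i j : Fin n} (hij : i < j) :
    (graphOf f).Adj i j ↔ j ≤ f i := by
  show i ≠ j ∧ max i j ≤ f (min i j) ↔ _
  rw [max_eq_right hij.le, min_eq_left hij.le]
  exact ⟨fun h => h.2, fun h => ⟨hij.ne, h⟩⟩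

lemma Good.le_self {f : Fin n → Fin n} (hf : Good f) (i : Fin n) : i ≤ f i := by
  rcases lt_or_ge ((i : ℕ) + 1) n with h | h
  · exact (hf.2 i h).le
  · match n, i with
    | 1, i => exact le_of_eq (Subsingleton.elim _ _)
    | (m+2), i =>
      have hi : (i : ℕ) = m + 1 := by have := i.isLt; omega
      have h1 : (⟨m, by omega⟩ : Fin (m+2)) < f ⟨m, by omega⟩ := hf.2 ⟨m, by omega⟩ (by simp)
      have h2 : f (⟨m, by omega⟩ : Fin (m+2)) ≤ f i := hf.1 (by simp [Fin.le_def, hi])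
      rw [Fin.lt_def] at h1
      rw [Fin.le_def] at h2 ⊢
      simp at h1
      omega

lemma intervalClique_graphOf {f : Fin n → Fin n} (hf : Monotone f) :
    IntervalClique (graphOf f) := by
  intro i j k l hij hadj hik hkj hil hlj hkl
  refine ⟨hkl, ?_⟩
  have hj : j ≤ f i := (graphOf_adj hij).1 hadj
  calc max k l ≤ j := max_le hkj hlj
    _ ≤ f i := hj
    _ ≤ f (min k l) := hf (le_min hik hil)

lemma connected_graphOf {f : Fin n → Fin n} (hf : Good f) (hn : 0 < n) :
    (graphOf f).Connected := by
  rw [SimpleGraph.connected_iff]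
  refine ⟨?_, ⟨⟨0, hn⟩⟩⟩
  have H : ∀ v : ℕ, ∀ h : v < n, (graphOf f).Reachable ⟨0, hn⟩ ⟨v, h⟩ := by
    intro v
    induction v with
    | zero => intro h; exact SimpleGraph.Reachable.refl _
    | succ w ih =>
      intro h
      have hw : w < n := by omega
      refine (ih hw).trans (SimpleGraph.Adj.reachable ?_)
      have hlt : (⟨w, hw⟩ : Fin n) < ⟨w+1, h⟩ := by simp [Fin.lt_def]
      rw [graphOf_adj hlt]
      have := hf.2 ⟨w, hw⟩ (by simpa using h)
      rw [Fin.lt_def] at this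
      rw [Fin.le_def]
      simpa using this
  intro u v
  have := (H u.1 u.2).symm.trans (H v.1 v.2)
  simpa using this

open Classical in
noncomputable def fOfSet (G : SimpleGraph (Fin n)) (i : Fin n) : Finset (Fin n) :=
  insert i (univ.filter fun j => i < j ∧ G.Adj i j)

lemma mem_fOfSet {G : SimpleGraph (Fin n)} {i j : Fin n} :
    j ∈ fOfSet G i ↔ j = i ∨ (i < j ∧ G.Adj i j) := by
  classical
  simp [fOfSet]

noncomputable def fOf (G : SimpleGraph (Fin n)) (i : Fin n) : Fin n :=
  (fOfSet G i).max' ⟨i, mem_fOfSet.2 (Or.inl rfl)⟩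

lemma le_fOf {G : SimpleGraph (Fin n)} (i : Fin n) : i ≤ fOf G i :=
  le_max' _ i (mem_fOfSet.2 (Or.inl rfl))

lemma fOf_spec (G : SimpleGraph (Fin n)) (i : Fin n) :
    fOf G i = i ∨ (i < fOf G i ∧ G.Adj i (fOf G i)) :=
  mem_fOfSet.1 (max'_mem _ _)

lemma adj_le_fOf {G : SimpleGraph (Fin n)} {i j : Fin n} (h : i < j) (ha : G.Adj i j) :
    j ≤ fOf G i :=
  le_max' _ j (mem_fOfSet.2 (Or.inr ⟨h, ha⟩))

lemma fOf_le {G : SimpleGraph (Fin n)} {i c : Fin n} (hc : i ≤ c)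
    (h : ∀ j, i < j → G.Adj i j → j ≤ c) : fOf G i ≤ c := by
  apply max'_le
  intro j hj
  rcases mem_fOfSet.1 hj with rfl | ⟨h1, h2⟩
  · exact hc
  · exact h j h1 h2

lemma adj_fOf {G : SimpleGraph (Fin n)} {i : Fin n} (h : i < fOf G i) : G.Adj i (fOf G i) := by
  rcases fOf_spec G i with he | ⟨_, ha⟩
  · exact absurd he (ne_of_gt h)
  · exact ha

/-- Crossing lemma: a walk from below `x` to above `x` contains a crossing edge. -/
lemma exists_cross {G : SimpleGraph (Fin n)} {u v : Fin n} (w : G.Walk u v) (x : Fin n)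
    (hu : u ≤ x) (hv : x < v) : ∃ a b : Fin n, G.Adj a b ∧ a ≤ x ∧ x < b := by
  induction w with
  | nil => exact absurd hv (not_lt.2 hu)
  | @cons p q t h w ih =>
    rcases le_or_gt q x with hq | hq
    · exact ih hq hv
    · exact ⟨p, q, h, hu, hq⟩

lemma good_fOf {G : SimpleGraph (Fin n)} (hIC : IntervalClique G) (hC : G.Connected) :
    Good (fOf G) := by
  constructor
  · intro i j hij
    rcases eq_or_lt_of_le hij with rfl | hij
    · exact le_refl _
    by_cases h : fOf G i ≤ j
    · exact le_trans h (le_fOf j)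
    push_neg at h
    have hadj : G.Adj i (fOf G i) := adj_fOf (lt_of_le_of_lt hij.le h)
    have : G.Adj j (fOf G i) :=
      hIC i (fOf G i) j (fOf G i) (lt_of_le_of_lt hij.le h) hadj hij.le h.le
        (le_fOf i) le_rfl (ne_of_lt h)
    exact adj_le_fOf h this
  · intro i hi
    have hlast : i < (⟨n - 1, by omega⟩ : Fin n) := by rw [Fin.lt_def]; simpa using by omega
    obtain ⟨w⟩ := hC.preconnected i ⟨n - 1, by omega⟩
    obtain ⟨a, b, hab, ha, hb⟩ := exists_cross w i le_rfl hlast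
    have hib : G.Adj i b := by
      rcases eq_or_lt_of_le ha with rfl | ha
      · exact hab
      · exact hIC a b i b (lt_trans ha hb) hab ha.le hb.le (le_trans ha.le hb.le) le_rfl
          (ne_of_lt hb)
    exact lt_of_lt_of_le hb (adj_le_fOf hb hib)

lemma graphOf_fOf {G : SimpleGraph (Fin n)} (hIC : IntervalClique G) :
    graphOf (fOf G) = G := by
  have helper : ∀ i j : Fin n, i < j → (G.Adj i j ↔ j ≤ fOf G i) := by
    intro i j hij
    constructor
    · exact adj_le_fOf hij
    · intro hj
      have hif : i < fOf G i := lt_of_lt_of_le hij hj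
      have hadj : G.Adj i (fOf G i) := adj_fOf hif
      rcases eq_or_lt_of_le hj with rfl | hj'
      · exact hadj
      · exact hIC i (fOf G i) i j hif hadj le_rfl (le_fOf i) hij.le hj (ne_of_lt hij)
  ext i j
  rcases lt_trichotomy i j with h | rfl | h
  · rw [graphOf_adj h, helper i j h]
  · simp [SimpleGraph.irrefl]
  · rw [(graphOf (fOf G)).adj_comm, G.adj_comm, graphOf_adj h, helper j i h]

lemma fOf_graphOf {f : Fin n → Fin n} (hf : Good f) : fOf (graphOf f) = f := by
  funext i
  apply le_antisymm
  · apply fOf_le (hf.le_self i)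
    intro j hj hadj
    exact (graphOf_adj hj).1 hadj
  · rcases eq_or_lt_of_le (hf.le_self i) with he | hlt
    · exact he ▸ le_fOf i
    · exact adj_le_fOf hlt ((graphOf_adj hlt).2 le_rfl)

/-! ### Part 2: maximal cliques -/

open Classical in
noncomputable def startSet (f : Fin n → Fin n) : Finset (Fin n) :=
  univ.filter (fun i => ∀ j, j < i → f j < f i)

lemma mem_startSet {f : Fin n → Fin n} {i : Fin n} :
    i ∈ startSet f ↔ ∀ j, j < i → f j < f i := by
  classical
  simp [startSet]

/-- The least preimage of a value. -/
noncomputable def leastPre (f : Fin n → Fin n) (v : Fin n) (hv : ∃ j, f j = v) : Fin n := by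
  classical
  exact (univ.filter fun j => f j = v).min' (by obtain ⟨j, hj⟩ := hv; exact ⟨j, by simp [hj]⟩)

lemma leastPre_spec {f : Fin n → Fin n} (hf : Monotone f) {v : Fin n} (hv : ∃ j, f j = v) :
    leastPre f v hv ∈ startSet f ∧ f (leastPre f v hv) = v ∧ ∀ j, f j = v → leastPre f v hv ≤ j := by
  classical
  set T := (univ.filter fun j => f j = v) with hT
  have hne : T.Nonempty := by obtain ⟨j, hj⟩ := hv; exact ⟨j, by simp [hT, hj]⟩
  have hmem : T.min' hne ∈ T := min'_mem _ _
  have hfval : f (T.min' hne) = v := by simpa [hT] using hmem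
  have hle : ∀ j, f j = v → T.min' hne ≤ j := by
    intro j hj; exact min'_le _ _ (by simp [hT, hj])
  have hval2 : f (leastPre f v hv) = v := by simpa [leastPre] using hfval
  have hle2 : ∀ j, f j = v → leastPre f v hv ≤ j := by
    intro j hj; simpa [leastPre] using hle j hj
  refine ⟨?_, hval2, hle2⟩
  rw [mem_startSet]
  intro j hj
  refine lt_of_le_of_ne (hf hj.le) ?_
  intro hjq
  have : leastPre f v hv ≤ j := hle2 j (by rw [hjq, hval2])
  exact absurd hj (not_lt.2 this)

lemma isClique_Icc {f : Fin n → Fin n} (hf : Monotone f) (i : Fin n) :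
    (graphOf f).IsClique (Icc i (f i) : Finset (Fin n)) := by
  intro a ha b hb hne
  simp only [coe_Icc, Set.mem_Icc] at ha hb
  refine ⟨hne, ?_⟩
  calc max a b ≤ f i := max_le ha.2 hb.2
    _ ≤ f (min a b) := hf (le_min ha.1 hb.1)

lemma clique_subset_Icc {f : Fin n → Fin n} (hf : Good f) {s : Finset (Fin n)}
    (hs : (graphOf f).IsClique (s : Set (Fin n))) (hne : s.Nonempty) :
    s ⊆ Icc (s.min' hne) (f (s.min' hne)) := by
  intro x hx
  rw [mem_Icc]
  refine ⟨min'_le _ _ hx, ?_⟩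
  rcases eq_or_lt_of_le (min'_le _ _ hx : s.min' hne ≤ x) with he | hlt
  · exact he ▸ hf.le_self _
  · have hadj := hs (mem_coe.2 (min'_mem _ _)) (mem_coe.2 hx) (ne_of_lt hlt)
    exact (graphOf_adj hlt).1 hadj

lemma maxclique_of_start {f : Fin n → Fin n} (hf : Good f) {i : Fin n} (hi : i ∈ startSet f) :
    IsMaxClique (graphOf f) (Icc i (f i)) := by
  refine ⟨isClique_Icc hf.1 i, ?_⟩
  intro t hcl hsub
  have hit : i ∈ t := hsub (mem_Icc.2 ⟨le_rfl, hf.le_self i⟩)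
  have hne : t.Nonempty := ⟨i, hit⟩
  have hsub2 := clique_subset_Icc hf hcl hne
  have hui : t.min' hne ≤ i := min'_le _ _ hit
  rcases eq_or_lt_of_le hui with he | hlt
  · apply Finset.Subset.antisymm hsub
    rw [← he]
    exact hsub2.trans (by rw [he])
  · exfalso
    have h1 : f (t.min' hne) < f i := (mem_startSet.1 hi) _ hlt
    have h2 : f i ∈ t := hsub (mem_Icc.2 ⟨hf.le_self i, le_rfl⟩)
    have h3 := mem_Icc.1 (hsub2 h2)
    exact absurd h3.2 (not_le.2 h1)

lemma maxclique_bijective {f : Fin n → Fin n} (hf : Good f) (hn : 0 < n) :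
    Function.Bijective (fun i : {i // i ∈ startSet f} =>
      (⟨Icc i.1 (f i.1), maxclique_of_start hf i.2⟩ :
        {s : Finset (Fin n) // IsMaxClique (graphOf f) s})) := by
  constructor
  · rintro ⟨i, hi⟩ ⟨i', hi'⟩ h
    simp only [Subtype.mk.injEq] at h
    have h1 : i ∈ Icc i' (f i') := h ▸ mem_Icc.2 ⟨le_rfl, hf.le_self i⟩
    have h2 : i' ∈ Icc i (f i) := h.symm ▸ mem_Icc.2 ⟨le_rfl, hf.le_self i'⟩
    exact Subtype.ext (le_antisymm (mem_Icc.1 h2).1 (mem_Icc.1 h1).1)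
  · rintro ⟨s, hs⟩
    have hne : s.Nonempty := by
      rcases s.eq_empty_or_nonempty with rfl | h
      · exfalso
        have h0 : (graphOf f).IsClique (({⟨0, hn⟩} : Finset (Fin n)) : Set (Fin n)) := by
          simp
        have := hs.2 {⟨0, hn⟩} h0 (empty_subset _)
        exact Finset.singleton_ne_empty _ this.symm
      · exact h
    set i₀ := s.min' hne with hi₀
    have hex : ∃ j, f j = f i₀ := ⟨i₀, rfl⟩
    obtain ⟨hstart, hval, hle⟩ := leastPre_spec hf.1 hex
    set p := leastPre f (f i₀) hex with hp
    have hpi : p ≤ i₀ := hle i₀ rfl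
    have hseq : s = Icc p (f p) := by
      apply hs.2 _ (isClique_Icc hf.1 p)
      refine (clique_subset_Icc hf hs.1 hne).trans (Icc_subset_Icc hpi (le_of_eq hval.symm))
    exact ⟨⟨p, hstart⟩, Subtype.ext hseq.symm⟩

lemma numMaxCliques_graphOf {f : Fin n → Fin n} (hf : Good f) (hn : 0 < n) :
    numMaxCliques (graphOf f) = (startSet f).card := by
  rw [numMaxCliques, Nat.card_congr (Equiv.ofBijective _ (maxclique_bijective hf hn)).symm]
  simp [Nat.card_eq_fintype_card]

lemma card_graphs_eq_card_goodFun (hn : 0 < n) (k : ℕ) :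
    Nat.card {G : SimpleGraph (Fin n) // IntervalClique G ∧ G.Connected ∧ numMaxCliques G = k}
      = Nat.card {f : Fin n → Fin n // Good f ∧ (startSet f).card = k} := by
  apply Nat.card_congr
  refine
    { toFun := fun G => ⟨fOf G.1, good_fOf G.2.1 G.2.2.1, ?_⟩
      invFun := fun f => ⟨graphOf f.1, intervalClique_graphOf f.2.1.1,
        connected_graphOf f.2.1 hn, ?_⟩
      left_inv := ?_
      right_inv := ?_ }
  · rw [← numMaxCliques_graphOf (good_fOf G.2.1 G.2.2.1) hn, graphOf_fOf G.2.1]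
    exact G.2.2.2
  · rw [numMaxCliques_graphOf f.2.1 hn]
    exact f.2.2
  · intro G
    exact Subtype.ext (graphOf_fOf G.2.1)
  · intro f
    exact Subtype.ext (fOf_graphOf f.2.1)

end IC

/-! ### Part B: good functions ↔ dominating pairs of order embeddings -/

section Pairs
variable {N r : ℕ}

def up1 (y : Fin N) : Fin (N + 2) := ⟨y.1 + 1, by omega⟩

lemma up1_inj : Function.Injective (up1 (N := N)) := by
  intro x y h
  simpa [up1, Fin.ext_iff] using h

lemma up1_lt_up1 {x y : Fin N} : up1 x < up1 y ↔ x < y := by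
  rw [Fin.lt_def, Fin.lt_def]
  simp [up1]

def tcnt (a : Fin r ↪o Fin N) (i : Fin (N + 2)) : ℕ :=
  (univ.filter fun s : Fin r => (a s : ℕ) < (i : ℕ)).card

lemma lt_tcnt_iff {a : Fin r ↪o Fin N} {i : Fin (N + 2)} {s : Fin r} :
    (s : ℕ) < tcnt a i ↔ (a s : ℕ) < (i : ℕ) := by
  constructor
  · intro h
    by_contra hc
    push_neg at hc
    have hsub : (univ.filter fun s' : Fin r => (a s' : ℕ) < (i : ℕ)) ⊆ Iio s := by
      intro s' hs'
      rw [mem_filter] at hs'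
      rw [mem_Iio, ← a.lt_iff_lt, Fin.lt_def]
      omega
    have h2 := card_le_card hsub
    rw [Fin.card_Iio] at h2
    have h3 : tcnt a i ≤ (s : ℕ) := h2
    omega
  · intro h
    have hsub : Iic s ⊆ (univ.filter fun s' : Fin r => (a s' : ℕ) < (i : ℕ)) := by
      intro s' hs'
      rw [mem_Iic] at hs'
      rw [mem_filter]
      have : (a s' : ℕ) ≤ (a s : ℕ) := a.le_iff_le.2 hs'
      exact ⟨mem_univ _, by omega⟩
    have h2 := card_le_card hsub
    rw [Fin.card_Iic] at h2
    exact h2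

lemma tcnt_le (a : Fin r ↪o Fin N) (i : Fin (N + 2)) : tcnt a i ≤ r :=
  le_trans (card_filter_le _ _) (by simp)

lemma tcnt_mono (a : Fin r ↪o Fin N) {i j : Fin (N + 2)} (h : i ≤ j) :
    tcnt a i ≤ tcnt a j := by
  apply card_le_card
  intro s hs
  rw [mem_filter] at hs ⊢
  rw [Fin.le_def] at h
  exact ⟨mem_univ _, by omega⟩

def stepVal (b : Fin r ↪o Fin N) (t : ℕ) : Fin (N + 2) :=
  if h : t < r then up1 (b ⟨t, h⟩) else ⟨N + 1, by omega⟩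

lemma stepVal_mono (b : Fin r ↪o Fin N) {t t' : ℕ} (h : t ≤ t') :
    stepVal b t ≤ stepVal b t' := by
  unfold stepVal
  split_ifs with h1 h2 h2
  · rw [Fin.le_def]
    simp only [up1]
    have : (b ⟨t, h1⟩ : ℕ) ≤ (b ⟨t', h2⟩ : ℕ) := b.le_iff_le.2 (by simp [Fin.le_def, h])
    omega
  · rw [Fin.le_def]
    simp only [up1]
    have := (b ⟨t, h1⟩).isLt
    omega
  · omega
  · exact le_refl _

lemma stepVal_lt (b : Fin r ↪o Fin N) {t t' : ℕ} (h : t < t') (h' : t' ≤ r) :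
    stepVal b t < stepVal b t' := by
  unfold stepVal
  have h1 : t < r := by omega
  rw [dif_pos h1]
  split_ifs with h2
  · rw [Fin.lt_def]
    simp only [up1]
    have : (b ⟨t, h1⟩ : ℕ) < (b ⟨t', h2⟩ : ℕ) := b.lt_iff_lt.2 (by simp [Fin.lt_def, h])
    omega
  · rw [Fin.lt_def]
    simp only [up1]
    have := (b ⟨t, h1⟩).isLt
    omega

def fB (a b : Fin r ↪o Fin N) : Fin (N + 2) → Fin (N + 2) := fun i => stepVal b (tcnt a i)

lemma good_fB {a b : Fin r ↪o Fin N} (hab : ∀ t, a t ≤ b t) : Good (fB a b) := by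
  constructor
  · intro i j hij
    exact stepVal_mono b (tcnt_mono a hij)
  · intro i hi
    unfold fB stepVal
    split_ifs with h1
    · rw [Fin.lt_def]
      simp only [up1]
      have h2 : ¬ ((a ⟨tcnt a i, h1⟩ : ℕ) < (i : ℕ)) := by
        intro hc
        exact absurd (lt_tcnt_iff.2 hc) (by simp)
      have h3 : (a ⟨tcnt a i, h1⟩ : ℕ) ≤ (b ⟨tcnt a i, h1⟩ : ℕ) := hab _
      omega
    · rw [Fin.lt_def]
      simp only
      omega

lemma fB_lt_iff {a b : Fin r ↪o Fin N} {i j : Fin (N + 2)} :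
    fB a b j < fB a b i ↔ tcnt a j < tcnt a i := by
  constructor
  · intro h
    by_contra hc
    push_neg at hc
    exact absurd (stepVal_mono b hc) (not_le.2 h)
  · intro h
    exact stepVal_lt b h (tcnt_le a i)

lemma startSet_fB (a b : Fin r ↪o Fin N) :
    startSet (fB a b) = insert ⟨0, by omega⟩ (univ.image fun s => up1 (a s)) := by
  ext i
  rw [mem_startSet, mem_insert, mem_image]
  constructor
  · intro h
    by_cases h0 : i = ⟨0, by omega⟩
    · exact Or.inl h0
    right
    have hi0 : (i : ℕ) ≠ 0 := fun hc => h0 (Fin.ext hc)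
    have hji : (⟨(i : ℕ) - 1, by omega⟩ : Fin (N + 2)) < i := by rw [Fin.lt_def]; show (i : ℕ) - 1 < i; omega
    have htc : tcnt a ⟨(i : ℕ) - 1, by omega⟩ < tcnt a i := fB_lt_iff.1 (h _ hji)
    set s : Fin r := ⟨tcnt a ⟨(i : ℕ) - 1, by omega⟩, lt_of_lt_of_le htc (tcnt_le a i)⟩ with hs
    have h1 : (a s : ℕ) < (i : ℕ) := lt_tcnt_iff.1 (by rw [hs]; exact htc)
    have h2 : ¬ ((a s : ℕ) < (i : ℕ) - 1) := by
      intro hc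
      have := lt_tcnt_iff.2 (show (a s : ℕ) < ((⟨(i : ℕ) - 1, by omega⟩ : Fin (N + 2)) : ℕ) by simpa using hc)
      rw [hs] at this
      simp at this
    exact ⟨s, mem_univ _, by simp only [up1]; apply Fin.ext; simp; omega⟩
  · intro h
    rcases h with h0 | ⟨s, _, hs⟩
    · intro j hj
      rw [h0] at hj
      exact absurd hj (by rw [Fin.lt_def]; simp)
    · intro j hj
      rw [← hs] at hj
      apply fB_lt_iff.2
      have hsv : (s : ℕ) < tcnt a i := lt_tcnt_iff.2 (by rw [← hs]; simp [up1])
      have hj' : (j : ℕ) ≤ (a s : ℕ) := by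
        rw [Fin.lt_def] at hj
        simp [up1] at hj
        omega
      have : tcnt a j ≤ (s : ℕ) := by
        by_contra hc
        push_neg at hc
        have := lt_tcnt_iff.1 hc
        omega
      omega

lemma card_startSet_fB (a b : Fin r ↪o Fin N) : (startSet (fB a b)).card = r + 1 := by
  rw [startSet_fB, card_insert_of_notMem, card_image_of_injective _ (fun x y h => a.injective (up1_inj h))]
  · simp
  · simp only [mem_image]
    rintro ⟨s, _, hs⟩
    have := congrArg Fin.val hs
    simp [up1] at this

lemma image_fB (a b : Fin r ↪o Fin N) :
    univ.image (fB a b) = insert ⟨N + 1, by omega⟩ (univ.image fun s => up1 (b s)) := by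
  apply Finset.Subset.antisymm
  · intro v hv
    rw [mem_image] at hv
    obtain ⟨i, _, hi⟩ := hv
    rw [mem_insert, mem_image]
    rw [← hi]
    unfold fB stepVal
    split_ifs with h1
    · exact Or.inr ⟨⟨tcnt a i, h1⟩, mem_univ _, rfl⟩
    · exact Or.inl rfl
  · intro v hv
    rw [mem_insert, mem_image] at hv
    rw [mem_image]
    rcases hv with rfl | ⟨s, _, hs⟩
    · refine ⟨⟨N + 1, by omega⟩, mem_univ _, ?_⟩
      unfold fB stepVal
      have ht : tcnt a ⟨N + 1, by omega⟩ = r := by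
        unfold tcnt
        rw [filter_true_of_mem, card_univ, Fintype.card_fin]
        intro s _
        have := (a s).isLt
        simp only
        omega
      rw [ht, dif_neg (lt_irrefl r)]
    · match s, hs with
      | ⟨0, h0⟩, hs =>
        refine ⟨⟨0, by omega⟩, mem_univ _, ?_⟩
        unfold fB stepVal
        have ht : tcnt a ⟨0, by omega⟩ = 0 := by
          unfold tcnt
          rw [filter_false_of_mem, card_empty]
          intro s _
          simp
        rw [ht, dif_pos h0]
        exact hs
      | ⟨w + 1, hw⟩, hs =>
        refine ⟨up1 (a ⟨w, by omega⟩), mem_univ _, ?_⟩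
        unfold fB stepVal
        have ht : tcnt a (up1 (a ⟨w, by omega⟩)) = w + 1 := by
          unfold tcnt
          have : (univ.filter fun s' : Fin r => (a s' : ℕ) < ((up1 (a ⟨w, by omega⟩)) : ℕ))
              = Iic ⟨w, by omega⟩ := by
            ext s'
            rw [mem_filter, mem_Iic, ← a.le_iff_le]
            have hval : ((up1 (a ⟨w, by omega⟩)) : ℕ) = (a ⟨w, by omega⟩ : ℕ) + 1 := rfl
            rw [Fin.le_def, hval]
            simp only [mem_univ, true_and]
            omega
          rw [this, Fin.card_Iic]
        rw [ht, dif_pos hw]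
        exact hs

variable {f : Fin (N + 2) → Fin (N + 2)}

lemma Good.last_eq (hf : Good f) : f ⟨N + 1, by omega⟩ = ⟨N + 1, by omega⟩ := by
  apply le_antisymm
  · rw [Fin.le_def]
    have := (f ⟨N + 1, by omega⟩).isLt
    simp only
    omega
  · exact hf.le_self _

lemma Good.val_pos (hf : Good f) (i : Fin (N + 2)) : 1 ≤ (f i : ℕ) := by
  have h0 : (⟨0, by omega⟩ : Fin (N + 2)) < f ⟨0, by omega⟩ := hf.2 ⟨0, by omega⟩ (by simp)
  have h1 : f ⟨0, by omega⟩ ≤ f i := hf.1 (by rw [Fin.le_def]; simp)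
  rw [Fin.lt_def] at h0
  rw [Fin.le_def] at h1
  simp at h0 h1
  omega

/-- starts other than `0`, shifted down by one. -/
noncomputable def Aset (f : Fin (N + 2) → Fin (N + 2)) : Finset (Fin N) :=
  univ.filter fun y => up1 y ∈ startSet f

/-- values other than the top, shifted down by one. -/
noncomputable def Bset (f : Fin (N + 2) → Fin (N + 2)) : Finset (Fin N) :=
  univ.filter fun y => up1 y ∈ univ.image f

lemma mem_Aset {y : Fin N} : y ∈ Aset f ↔ up1 y ∈ startSet f := by
  simp [Aset]

lemma mem_Bset {y : Fin N} : y ∈ Bset f ↔ up1 y ∈ univ.image f := by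
  simp only [Bset, mem_filter, mem_univ, true_and]

lemma zero_mem_startSet : (⟨0, by omega⟩ : Fin (N + 2)) ∈ startSet f := by
  rw [mem_startSet]
  intro j hj
  exact absurd hj (by rw [Fin.lt_def]; simp)

lemma startSet_eq (hf : Good f) :
    startSet f = insert ⟨0, by omega⟩ ((Aset f).image up1) := by
  apply Finset.Subset.antisymm
  · intro x hx
    rw [mem_insert, mem_image]
    by_cases h0 : (x : ℕ) = 0
    · exact Or.inl (Fin.ext h0)
    right
    have hxN : (x : ℕ) ≤ N := by
      by_contra hc
      have hx1 : (x : ℕ) = N + 1 := by have := x.isLt; omega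
      have h1 : f ⟨N, by omega⟩ < f x := (mem_startSet.1 hx) ⟨N, by omega⟩ (by rw [Fin.lt_def]; simp; omega)
      have h2 : (⟨N, by omega⟩ : Fin (N + 2)) < f ⟨N, by omega⟩ := hf.2 ⟨N, by omega⟩ (by simp)
      rw [Fin.lt_def] at h1 h2
      have := (f x).isLt
      simp at h2
      omega
    refine ⟨⟨(x : ℕ) - 1, by omega⟩, ?_, ?_⟩
    · rw [mem_Aset]
      have : up1 (⟨(x : ℕ) - 1, by omega⟩ : Fin N) = x := by
        apply Fin.ext; simp [up1]; omega
      rw [this]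
      exact hx
    · apply Fin.ext; simp [up1]; omega
  · intro x hx
    rw [mem_insert, mem_image] at hx
    rcases hx with rfl | ⟨y, hy, rfl⟩
    · exact zero_mem_startSet
    · exact mem_Aset.1 hy

lemma card_Aset (hf : Good f) (hS : (startSet f).card = r + 1) : (Aset f).card = r := by
  rw [startSet_eq hf, card_insert_of_notMem, card_image_of_injective _ up1_inj] at hS
  · omega
  · simp only [mem_image]
    rintro ⟨y, _, hy⟩
    have := congrArg Fin.val hy
    simp [up1] at this

lemma image_eq (hf : Good f) :
    univ.image f = insert ⟨N + 1, by omega⟩ ((Bset f).image up1) := by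
  apply Finset.Subset.antisymm
  · intro v hv
    rw [mem_insert, mem_image]
    rw [mem_image] at hv
    obtain ⟨i, _, rfl⟩ := hv
    by_cases h0 : (f i : ℕ) = N + 1
    · exact Or.inl (Fin.ext h0)
    right
    have h1 := hf.val_pos i
    have h2 := (f i).isLt
    refine ⟨⟨(f i : ℕ) - 1, by omega⟩, ?_, ?_⟩
    · rw [mem_Bset]
      have : up1 (⟨(f i : ℕ) - 1, by omega⟩ : Fin N) = f i := by
        apply Fin.ext; simp [up1]; omega
      rw [this]
      exact mem_image_of_mem f (mem_univ i)
    · apply Fin.ext; simp [up1]; omega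
  · intro v hv
    rw [mem_insert, mem_image] at hv
    rcases hv with rfl | ⟨y, hy, rfl⟩
    · rw [← hf.last_eq]
      exact mem_image_of_mem f (mem_univ _)
    · exact mem_Bset.1 hy

lemma startSet_inj (hf : Good f) {q q' : Fin (N + 2)} (hq : q ∈ startSet f)
    (hq' : q' ∈ startSet f) (h : f q = f q') : q = q' := by
  rcases lt_trichotomy q q' with hlt | he | hlt
  · exact absurd h (ne_of_lt ((mem_startSet.1 hq') q hlt))
  · exact he
  · exact absurd h.symm (ne_of_lt ((mem_startSet.1 hq) q' hlt))

lemma card_image_f (hf : Good f) : (univ.image f).card = (startSet f).card := by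
  symm
  apply Finset.card_bij (fun i _ => f i)
  · intro q hq
    exact mem_image_of_mem f (mem_univ q)
  · intro q hq q' hq' h
    exact startSet_inj hf hq hq' h
  · intro v hv
    rw [mem_image] at hv
    obtain ⟨i, _, rfl⟩ := hv
    obtain ⟨h1, h2, _⟩ := leastPre_spec hf.1 (⟨i, rfl⟩ : ∃ j, f j = f i)
    exact ⟨_, h1, h2⟩

lemma card_Bset (hf : Good f) (hS : (startSet f).card = r + 1) : (Bset f).card = r := by
  have h1 : (univ.image f).card = r + 1 := by rw [card_image_f hf, hS]
  rw [image_eq hf, card_insert_of_notMem, card_image_of_injective _ up1_inj] at h1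
  · omega
  · simp only [mem_image]
    rintro ⟨y, _, hy⟩
    have := congrArg Fin.val hy
    have := y.isLt
    simp [up1] at *
    omega

lemma image_orderEmbOfFin {α : Type*} [LinearOrder α] [DecidableEq α] (s : Finset α) {k : ℕ} (h : s.card = k) :
    univ.image (s.orderEmbOfFin h) = s := by
  apply Finset.coe_injective
  rw [coe_image, coe_univ, Set.image_univ, range_orderEmbOfFin]

lemma eq_of_count_lt {α : Type*} [LinearOrder α] {s : Finset α} {v w : α} (hv : v ∈ s)
    (hw : w ∈ s) (h : (s.filter (· < v)).card = (s.filter (· < w)).card) : v = w := by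
  classical
  rcases lt_trichotomy v w with hlt | he | hlt
  · exfalso
    have hss : s.filter (· < v) ⊂ s.filter (· < w) := by
      constructor
      · intro q hq
        rw [mem_filter] at hq ⊢
        exact ⟨hq.1, lt_trans hq.2 hlt⟩
      · intro hsub
        have : v ∈ s.filter (· < v) := hsub (mem_filter.2 ⟨hv, hlt⟩)
        rw [mem_filter] at this
        exact absurd this.2 (lt_irrefl v)
    have := card_lt_card hss
    omega
  · exact he
  · exfalso
    have hss : s.filter (· < w) ⊂ s.filter (· < v) := by
      constructor
      · intro q hq
        rw [mem_filter] at hq ⊢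
        exact ⟨hq.1, lt_trans hq.2 hlt⟩
      · intro hsub
        have : w ∈ s.filter (· < w) := hsub (mem_filter.2 ⟨hw, hlt⟩)
        rw [mem_filter] at this
        exact absurd this.2 (lt_irrefl w)
    have := card_lt_card hss
    omega

lemma count_startSet_le (hf : Good f) (hS : (startSet f).card = r + 1) (i : Fin (N + 2)) :
    ((startSet f).filter (· ≤ i)).card
      = tcnt ((Aset f).orderEmbOfFin (card_Aset hf hS)) i + 1 := by
  classical
  set a := (Aset f).orderEmbOfFin (card_Aset hf hS) with ha
  have hAm : ∀ y, y ∈ Aset f ↔ ∃ s, a s = y := by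
    intro y
    rw [← mem_coe, ← range_orderEmbOfFin (Aset f) (card_Aset hf hS)]
    exact Set.mem_range
  have hset : (startSet f).filter (· ≤ i)
      = insert ⟨0, by omega⟩
          (((univ.filter fun s : Fin r => (a s : ℕ) < (i : ℕ))).image (fun s => up1 (a s))) := by
    ext q
    rw [mem_filter, mem_insert, mem_image]
    constructor
    · rintro ⟨hq, hqi⟩
      rw [startSet_eq hf, mem_insert, mem_image] at hq
      rcases hq with rfl | ⟨y, hy, rfl⟩
      · exact Or.inl rfl
      · right
        rw [hAm] at hy
        obtain ⟨s, rfl⟩ := hy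
        refine ⟨s, ?_, rfl⟩
        rw [mem_filter]
        refine ⟨mem_univ _, ?_⟩
        rw [Fin.le_def] at hqi
        simp [up1] at hqi
        omega
    · rintro (rfl | ⟨s, hs, rfl⟩)
      · exact ⟨zero_mem_startSet, by rw [Fin.le_def]; simp⟩
      · rw [mem_filter] at hs
        constructor
        · rw [startSet_eq hf, mem_insert, mem_image]
          exact Or.inr ⟨a s, (hAm (a s)).2 ⟨s, rfl⟩, rfl⟩
        · rw [Fin.le_def]
          simp [up1]
          omega
  rw [hset, card_insert_of_notMem, card_image_of_injective _ (fun x y h => a.injective (up1_inj h))]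
  · rfl
  · simp only [mem_image]
    rintro ⟨s, _, hy⟩
    have := congrArg Fin.val hy
    simp [up1] at this

lemma tcnt_at_emb (a : Fin r ↪o Fin N) (t : Fin r) :
    tcnt a ⟨(a t : ℕ), by omega⟩ = (t : ℕ) := by
  unfold tcnt
  have hset : (univ.filter fun s : Fin r =>
      (a s : ℕ) < (((⟨(a t : ℕ), by omega⟩ : Fin (N + 2))) : ℕ)) = Iio t := by
    ext s
    rw [mem_filter, mem_Iio, ← a.lt_iff_lt, Fin.lt_def]
    simp
  rw [hset, Fin.card_Iio]

lemma aEmb_le_bEmb (hf : Good f) (hS : (startSet f).card = r + 1) (t : Fin r) :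
    (Aset f).orderEmbOfFin (card_Aset hf hS) t ≤ (Bset f).orderEmbOfFin (card_Bset hf hS) t := by
  classical
  set a := (Aset f).orderEmbOfFin (card_Aset hf hS) with ha
  set b := (Bset f).orderEmbOfFin (card_Bset hf hS) with hb
  by_contra hc
  push_neg at hc
  set x := a t with hx
  have hBsub : (Iic t).image b ⊆ (Bset f).filter (· < x) := by
    intro v hv
    rw [mem_image] at hv
    obtain ⟨s, hs, rfl⟩ := hv
    rw [mem_filter]
    exact ⟨orderEmbOfFin_mem _ _ _, lt_of_le_of_lt (b.le_iff_le.2 (mem_Iic.1 hs)) hc⟩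
  have h1 : (t : ℕ) + 1 ≤ ((Bset f).filter (· < x)).card := by
    have := card_le_card hBsub
    rwa [card_image_of_injective _ b.injective, Fin.card_Iic] at this
  set ip : Fin (N + 2) := ⟨(x : ℕ), by omega⟩ with hip
  have h2 : ((startSet f).filter (· ≤ ip)).card = (t : ℕ) + 1 := by
    rw [count_startSet_le hf hS ip]
    have h6 : tcnt ((Aset f).orderEmbOfFin (card_Aset hf hS)) ip = (t : ℕ) := tcnt_at_emb a t
    omega
  have hipf : (ip : ℕ) + 1 < N + 2 := by
    have := x.isLt
    simp [hip]
  have hfi : ip < f ip := hf.2 ip hipf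
  obtain ⟨hq0s, hq0v, hq0le⟩ := leastPre_spec hf.1 (⟨ip, rfl⟩ : ∃ j, f j = f ip)
  set q0 := leastPre f (f ip) ⟨ip, rfl⟩ with hq0
  have hq0ip : q0 ≤ ip := hq0le ip rfl
  have hq0mem : q0 ∈ (startSet f).filter (· ≤ ip) := mem_filter.2 ⟨hq0s, hq0ip⟩
  have h3 : ((Bset f).filter (· < x)).card ≤ (((startSet f).filter (· ≤ ip)).erase q0).card := by
    apply card_le_card_of_injOn (fun y => if hy : ∃ j, f j = up1 y then leastPre f (up1 y) hy else q0)
    · intro y hy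
      simp only [mem_coe, mem_filter] at hy ⊢
      obtain ⟨hyB, hyx⟩ := hy
      have hex : ∃ j, f j = up1 y := by
        have h7 := mem_Bset.1 hyB
        rw [mem_image] at h7
        obtain ⟨j, _, hj⟩ := h7
        exact ⟨j, hj⟩
      rw [dif_pos hex]
      obtain ⟨hps, hpv, hple⟩ := leastPre_spec hf.1 hex
      rw [mem_erase, mem_filter]
      have hyx' : (y : ℕ) < (x : ℕ) := hyx
      refine ⟨?_, hps, ?_⟩
      · intro he
        have hval : up1 y = f ip := by rw [← hpv, he, hq0v]
        have h5 := congrArg Fin.val hval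
        rw [Fin.lt_def] at hfi
        simp [up1, hip] at h5 hfi
        omega
      · have hle2 : leastPre f (up1 y) hex ≤ up1 y :=
          le_trans (hf.le_self _) (le_of_eq hpv)
        rw [Fin.le_def] at hle2 ⊢
        simp [up1, hip] at hle2 ⊢
        omega
    · intro y hy y' hy' he
      simp only [mem_coe, mem_filter] at hy hy'
      have hex : ∃ j, f j = up1 y := by
        have h7 := mem_Bset.1 hy.1
        rw [mem_image] at h7
        obtain ⟨j, _, hj⟩ := h7
        exact ⟨j, hj⟩
      have hex' : ∃ j, f j = up1 y' := by
        have h7 := mem_Bset.1 hy'.1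
        rw [mem_image] at h7
        obtain ⟨j, _, hj⟩ := h7
        exact ⟨j, hj⟩
      have he' : (if hy : ∃ j, f j = up1 y then leastPre f (up1 y) hy else q0)
          = (if hy : ∃ j, f j = up1 y' then leastPre f (up1 y') hy else q0) := he
      rw [dif_pos hex, dif_pos hex'] at he'
      apply up1_inj
      rw [← (leastPre_spec hf.1 hex).2.1, ← (leastPre_spec hf.1 hex').2.1, he']
  have h4 : (((startSet f).filter (· ≤ ip)).erase q0).card = (t : ℕ) := by
    rw [card_erase_of_mem hq0mem, h2]
    omega
  omega

lemma count_image_lt_start (hf : Good f) {q : Fin (N + 2)} (hq : q ∈ startSet f) :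
    ((univ.image f).filter (· < f q)).card = ((startSet f).filter (· < q)).card := by
  classical
  symm
  apply Finset.card_bij (fun q' _ => f q')
  · intro q' hq'
    rw [mem_filter] at hq' ⊢
    exact ⟨mem_image_of_mem f (mem_univ _), (mem_startSet.1 hq) q' hq'.2⟩
  · intro q1 h1 q2 h2 h
    rw [mem_filter] at h1 h2
    exact startSet_inj hf h1.1 h2.1 h
  · intro v hv
    rw [mem_filter] at hv
    obtain ⟨hvi, hvlt⟩ := hv
    rw [mem_image] at hvi
    obtain ⟨i, _, rfl⟩ := hvi
    obtain ⟨h1, h2, h3⟩ := leastPre_spec hf.1 (⟨i, rfl⟩ : ∃ j, f j = f i)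
    refine ⟨leastPre f (f i) ⟨i, rfl⟩, mem_filter.2 ⟨h1, ?_⟩, h2⟩
    by_contra hcc
    push_neg at hcc
    have h4 : f q ≤ f (leastPre f (f i) ⟨i, rfl⟩) := hf.1 hcc
    rw [h2] at h4
    exact absurd hvlt (not_lt.2 h4)

lemma count_image_lt_up1b (hf : Good f) (hS : (startSet f).card = r + 1) (s : Fin r) :
    ((univ.image f).filter
      (· < up1 ((Bset f).orderEmbOfFin (card_Bset hf hS) s))).card = (s : ℕ) := by
  classical
  set b := (Bset f).orderEmbOfFin (card_Bset hf hS) with hb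
  have hBm : ∀ y, y ∈ Bset f ↔ ∃ s', b s' = y := by
    intro y
    rw [← mem_coe, ← range_orderEmbOfFin (Bset f) (card_Bset hf hS)]
    exact Set.mem_range
  have hset : (univ.image f).filter (· < up1 (b s)) = (Iio s).image (fun s' => up1 (b s')) := by
    ext v
    rw [mem_filter]
    constructor
    · rintro ⟨hvi, hlt⟩
      rw [image_eq hf, mem_insert, mem_image] at hvi
      rw [mem_image]
      rcases hvi with rfl | ⟨y, hy, rfl⟩
      · exfalso
        rw [Fin.lt_def] at hlt
        have := (b s).isLt
        simp [up1] at hlt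
        omega
      · obtain ⟨s', rfl⟩ := (hBm y).1 hy
        refine ⟨s', ?_, rfl⟩
        rw [mem_Iio]
        exact b.lt_iff_lt.1 (up1_lt_up1.1 hlt)
    · intro hv
      rw [mem_image] at hv
      obtain ⟨s', hs', rfl⟩ := hv
      rw [mem_Iio] at hs'
      constructor
      · rw [image_eq hf, mem_insert, mem_image]
        exact Or.inr ⟨b s', (hBm _).2 ⟨s', rfl⟩, rfl⟩
      · have h9 : (b s' : ℕ) < (b s : ℕ) := b.strictMono hs'
        rw [Fin.lt_def]
        simp [up1]
        omega
  rw [hset, card_image_of_injective _ (fun x y h => b.injective (up1_inj h)), Fin.card_Iio]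

lemma count_image_lt_last (hf : Good f) (hS : (startSet f).card = r + 1) :
    ((univ.image f).filter (· < (⟨N + 1, by omega⟩ : Fin (N + 2)))).card = r := by
  classical
  have hset : (univ.image f).filter (· < (⟨N + 1, by omega⟩ : Fin (N + 2)))
      = (Bset f).image up1 := by
    ext v
    rw [mem_filter]
    constructor
    · rintro ⟨hvi, hlt⟩
      rw [image_eq hf, mem_insert] at hvi
      rcases hvi with rfl | h
      · exact absurd hlt (lt_irrefl _)
      · exact h
    · intro h
      refine ⟨by rw [image_eq hf]; exact mem_insert_of_mem h, ?_⟩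
      rw [mem_image] at h
      obtain ⟨y, _, rfl⟩ := h
      rw [Fin.lt_def]
      have := y.isLt
      simp [up1]
  rw [hset, card_image_of_injective _ up1_inj, card_Bset hf hS]

lemma fB_Psi (hf : Good f) (hS : (startSet f).card = r + 1) :
    fB ((Aset f).orderEmbOfFin (card_Aset hf hS))
       ((Bset f).orderEmbOfFin (card_Bset hf hS)) = f := by
  classical
  set a := (Aset f).orderEmbOfFin (card_Aset hf hS) with ha
  set b := (Bset f).orderEmbOfFin (card_Bset hf hS) with hb
  funext i
  set c := tcnt a i with hc
  have hne : ((startSet f).filter (· ≤ i)).Nonempty :=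
    ⟨⟨0, by omega⟩, mem_filter.2 ⟨zero_mem_startSet, by rw [Fin.le_def]; simp⟩⟩
  obtain ⟨pmax, hpm⟩ : ∃ p, p = ((startSet f).filter (· ≤ i)).max' hne := ⟨_, rfl⟩
  have hpmem : pmax ∈ (startSet f).filter (· ≤ i) := by rw [hpm]; exact max'_mem _ hne
  have hpS : pmax ∈ startSet f ∧ pmax ≤ i := mem_filter.1 hpmem
  have hfip : f i = f pmax := by
    apply le_antisymm
    · obtain ⟨h1, h2, h3⟩ := leastPre_spec hf.1 (⟨i, rfl⟩ : ∃ j, f j = f i)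
      have hq0i : leastPre f (f i) ⟨i, rfl⟩ ≤ i := h3 i rfl
      have h4 : leastPre f (f i) ⟨i, rfl⟩ ≤ pmax := by
        rw [hpm]
        exact Finset.le_max' ((startSet f).filter (· ≤ i)) (leastPre f (f i) ⟨i, rfl⟩)
          (mem_filter.2 ⟨h1, hq0i⟩)
      calc f i = f (leastPre f (f i) ⟨i, rfl⟩) := h2.symm
        _ ≤ f pmax := hf.1 h4
    · exact hf.1 hpS.2
  have hcount1 : ((startSet f).filter (· < pmax)).card = c := by
    have he : (startSet f).filter (· < pmax) = ((startSet f).filter (· ≤ i)).erase pmax := by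
      ext q
      rw [mem_filter, mem_erase, mem_filter]
      constructor
      · rintro ⟨h1, h2⟩
        exact ⟨ne_of_lt h2, h1, le_trans (le_of_lt h2) hpS.2⟩
      · rintro ⟨h1, h2, h3⟩
        refine ⟨h2, lt_of_le_of_ne ?_ h1⟩
        rw [hpm]
        exact Finset.le_max' ((startSet f).filter (· ≤ i)) q (mem_filter.2 ⟨h2, h3⟩)
    rw [he, card_erase_of_mem hpmem, count_startSet_le hf hS i]
    have h5 : tcnt ((Aset f).orderEmbOfFin (card_Aset hf hS)) i = c := rfl
    omega
  have hcount2 : ((univ.image f).filter (· < f pmax)).card = c := by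
    rw [count_image_lt_start hf hpS.1, hcount1]
  show stepVal b c = f i
  rw [hfip]
  unfold stepVal
  split_ifs with h1
  · apply eq_of_count_lt (s := univ.image f)
    · rw [image_eq hf, mem_insert, mem_image]
      exact Or.inr ⟨b ⟨c, h1⟩, orderEmbOfFin_mem _ _ _, rfl⟩
    · exact mem_image_of_mem f (mem_univ pmax)
    · have h6 := count_image_lt_up1b hf hS ⟨c, h1⟩
      rw [← hb] at h6
      rw [h6, hcount2]
  · apply eq_of_count_lt (s := univ.image f)
    · rw [image_eq hf]
      exact mem_insert_self _ _
    · exact mem_image_of_mem f (mem_univ pmax)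
    · have hcr : c = r := by
        have := tcnt_le a i
        rw [← hc] at this
        omega
      rw [count_image_lt_last hf hS, hcount2, hcr]

lemma Aset_fB_emb (a b : Fin r ↪o Fin N) (h : (Aset (fB a b)).card = r) :
    (Aset (fB a b)).orderEmbOfFin h = a := by
  refine (orderEmbOfFin_unique' h ?_).symm
  intro x
  rw [mem_Aset, startSet_fB, mem_insert, mem_image]
  exact Or.inr ⟨x, mem_univ x, rfl⟩

lemma Bset_fB_emb (a b : Fin r ↪o Fin N) (h : (Bset (fB a b)).card = r) :
    (Bset (fB a b)).orderEmbOfFin h = b := by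
  refine (orderEmbOfFin_unique' h ?_).symm
  intro x
  rw [mem_Bset, image_fB, mem_insert, mem_image]
  exact Or.inr ⟨x, mem_univ x, rfl⟩

lemma card_goodFun_eq_card_pairs (N r : ℕ) :
    Nat.card {f : Fin (N + 2) → Fin (N + 2) // Good f ∧ (startSet f).card = r + 1}
      = Nat.card {p : (Fin r ↪o Fin N) × (Fin r ↪o Fin N) // ∀ t, p.1 t ≤ p.2 t} := by
  apply Nat.card_congr
  exact
    { toFun := fun F => ⟨((Aset F.1).orderEmbOfFin (card_Aset F.2.1 F.2.2),
        (Bset F.1).orderEmbOfFin (card_Bset F.2.1 F.2.2)), aEmb_le_bEmb F.2.1 F.2.2⟩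
      invFun := fun P => ⟨fB P.1.1 P.1.2, good_fB P.2, card_startSet_fB _ _⟩
      left_inv := fun F => Subtype.ext (fB_Psi F.2.1 F.2.2)
      right_inv := fun P => Subtype.ext (Prod.ext (Aset_fB_emb _ _ _) (Bset_fB_emb _ _ _)) }

end Pairs

/-! ### Part C: reflection bijection -/

section Reflect
variable {N s : ℕ}

noncomputable def leastUpto {k : ℕ} (W : Finset (Fin k)) (dflt : ℕ) : ℕ :=
  if h : W.Nonempty then ((W.min' h : Fin k) : ℕ) else dflt

lemma leastUpto_eq {k : ℕ} {W : Finset (Fin k)} {dflt : ℕ} (x : Fin k) (hx : x ∈ W)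
    (hmin : ∀ t, t < x → t ∉ W) : leastUpto W dflt = (x : ℕ) := by
  rw [leastUpto, dif_pos ⟨x, hx⟩]
  congr 1
  apply le_antisymm (min'_le _ _ hx)
  by_contra hc
  push_neg at hc
  exact hmin _ hc (min'_mem _ _)

lemma leastUpto_eq_dflt {k : ℕ} {W : Finset (Fin k)} {d : ℕ} (h : ∀ t, t ∉ W) :
    leastUpto W d = d := by
  rw [leastUpto, dif_neg]
  rintro ⟨t, ht⟩
  exact h t ht

lemma leastUpto_not_mem {k : ℕ} {W : Finset (Fin k)} {d : ℕ} (t : Fin k)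
    (ht : (t : ℕ) < leastUpto W d) : t ∉ W := by
  intro hmem
  rw [leastUpto, dif_pos ⟨t, hmem⟩] at ht
  have h2 := min'_le W t hmem
  rw [Fin.le_def] at h2
  omega

lemma leastUpto_mem {k : ℕ} {W : Finset (Fin k)} {d : ℕ} (hne : W.Nonempty) :
    ∃ h : leastUpto W d < k, (⟨leastUpto W d, h⟩ : Fin k) ∈ W := by
  rw [leastUpto, dif_pos hne]
  refine ⟨(W.min' hne).isLt, ?_⟩
  simpa using min'_mem W hne

/-- the splice functions -/
def spC (a b : Fin (s + 1) ↪o Fin N) (j : ℕ) (hj : j ≤ s) : Fin (s + 2) → Fin N := fun t =>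
  if h : (t : ℕ) ≤ j then b ⟨t, by omega⟩ else a ⟨(t : ℕ) - 1, by have := t.isLt; omega⟩

def spD (a b : Fin (s + 1) ↪o Fin N) (j : ℕ) (hj : j ≤ s) : Fin s → Fin N := fun t =>
  if h : (t : ℕ) < j then a ⟨t, by have := t.isLt; omega⟩
  else b ⟨(t : ℕ) + 1, by have := t.isLt; omega⟩

def spA (c : Fin (s + 2) ↪o Fin N) (d : Fin s ↪o Fin N) (j : ℕ) (hj : j ≤ s) :
    Fin (s + 1) → Fin N := fun t =>
  if h : (t : ℕ) < j then d ⟨t, by omega⟩ else c ⟨(t : ℕ) + 1, by have := t.isLt; omega⟩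

def spB (c : Fin (s + 2) ↪o Fin N) (d : Fin s ↪o Fin N) (j : ℕ) (hj : j ≤ s) :
    Fin (s + 1) → Fin N := fun t =>
  if h : (t : ℕ) ≤ j then c ⟨t, by have := t.isLt; omega⟩
  else d ⟨(t : ℕ) - 1, by have := t.isLt; omega⟩

lemma emb_lt_emb {k : ℕ} (e : Fin k ↪o Fin N) {v w : ℕ} {p : v < k} {q : w < k} (h : v < w) :
    e ⟨v, p⟩ < e ⟨w, q⟩ := e.strictMono (by rw [Fin.lt_def]; exact h)

lemma emb_le_emb {k : ℕ} (e : Fin k ↪o Fin N) {v w : ℕ} {p : v < k} {q : w < k} (h : v ≤ w) :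
    e ⟨v, p⟩ ≤ e ⟨w, q⟩ := e.monotone (by rw [Fin.le_def]; exact h)

lemma fin_congr {k : ℕ} (e : Fin k ↪o Fin N) {v w : ℕ} {p : v < k} {q : w < k} (h : v = w) :
    e ⟨v, p⟩ = e ⟨w, q⟩ := by subst h; rfl

lemma spC_sm (a b : Fin (s + 1) ↪o Fin N) (j : ℕ) (hj : j ≤ s)
    (hvio : b ⟨j, by omega⟩ < a ⟨j, by omega⟩) : StrictMono (spC a b j hj) := by
  intro t t' hlt
  rw [Fin.lt_def] at hlt
  unfold spC
  split_ifs with h1 h2 h2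
  · exact emb_lt_emb b hlt
  · calc b ⟨(t : ℕ), by omega⟩ ≤ b ⟨j, by omega⟩ := emb_le_emb b h1
      _ < a ⟨j, by omega⟩ := hvio
      _ ≤ a ⟨(t' : ℕ) - 1, by have := t'.isLt; omega⟩ := emb_le_emb a (by omega)
  · omega
  · exact emb_lt_emb a (by omega)

lemma spD_sm (a b : Fin (s + 1) ↪o Fin N) (j : ℕ) (hj : j ≤ s)
    (hmin : ∀ t : Fin (s + 1), (t : ℕ) < j → a t ≤ b t) : StrictMono (spD a b j hj) := by
  intro t t' hlt
  rw [Fin.lt_def] at hlt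
  unfold spD
  split_ifs with h1 h2 h2
  · exact emb_lt_emb a hlt
  · calc a ⟨(t : ℕ), by have := t.isLt; omega⟩
        ≤ b ⟨(t : ℕ), by have := t.isLt; omega⟩ := hmin _ h1
      _ < b ⟨(t' : ℕ) + 1, by have := t'.isLt; omega⟩ := emb_lt_emb b (by omega)
  · omega
  · exact emb_lt_emb b (by omega)

lemma spA_sm (c : Fin (s + 2) ↪o Fin N) (d : Fin s ↪o Fin N) (j : ℕ) (hj : j ≤ s)
    (hmin : ∀ t : Fin s, (t : ℕ) < j → ¬ (c ⟨t, by have := t.isLt; omega⟩ < d t)) :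
    StrictMono (spA c d j hj) := by
  intro t t' hlt
  rw [Fin.lt_def] at hlt
  unfold spA
  split_ifs with h1 h2 h2
  · exact emb_lt_emb d hlt
  · have h3 := hmin ⟨t, by omega⟩ h1
    push_neg at h3
    calc d ⟨(t : ℕ), by omega⟩ ≤ c ⟨(t : ℕ), by have := t.isLt; omega⟩ := h3
      _ < c ⟨(t' : ℕ) + 1, by have := t'.isLt; omega⟩ := emb_lt_emb c (by omega)
  · omega
  · exact emb_lt_emb c (by omega)

lemma spB_sm (c : Fin (s + 2) ↪o Fin N) (d : Fin s ↪o Fin N) (j : ℕ) (hj : j ≤ s)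
    (hvio : ∀ h : j < s, c ⟨j, by omega⟩ < d ⟨j, h⟩) : StrictMono (spB c d j hj) := by
  intro t t' hlt
  rw [Fin.lt_def] at hlt
  unfold spB
  split_ifs with h1 h2 h2
  · exact emb_lt_emb c hlt
  · have hjs : j < s := by have := t'.isLt; omega
    calc c ⟨(t : ℕ), by have := t.isLt; omega⟩ ≤ c ⟨j, by omega⟩ := emb_le_emb c h1
      _ < d ⟨j, hjs⟩ := hvio hjs
      _ ≤ d ⟨(t' : ℕ) - 1, by have := t'.isLt; omega⟩ := emb_le_emb d (by omega)
  · omega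
  · exact emb_lt_emb d (by omega)

noncomputable def refJ (a b : Fin (s + 1) ↪o Fin N) : ℕ :=
  leastUpto (univ.filter fun t => b t < a t) 0

lemma refJ_le (a b : Fin (s + 1) ↪o Fin N) : refJ a b ≤ s := by
  unfold refJ leastUpto
  split_ifs with h
  · exact Nat.lt_succ_iff.1 (Fin.isLt _)
  · omega

lemma refJ_min (a b : Fin (s + 1) ↪o Fin N) :
    ∀ t : Fin (s + 1), (t : ℕ) < refJ a b → a t ≤ b t := by
  intro t ht
  have h2 := leastUpto_not_mem t ht
  rw [mem_filter] at h2
  push_neg at h2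
  exact h2 (mem_univ t)

lemma refJ_vio (a b : Fin (s + 1) ↪o Fin N) (hbad : ¬ ∀ t, a t ≤ b t) :
    b ⟨refJ a b, by have := refJ_le a b; omega⟩ < a ⟨refJ a b, by have := refJ_le a b; omega⟩ := by
  push_neg at hbad
  obtain ⟨t, ht⟩ := hbad
  have hne : (univ.filter fun t => b t < a t).Nonempty := ⟨t, mem_filter.2 ⟨mem_univ _, ht⟩⟩
  obtain ⟨h, hmem⟩ := leastUpto_mem (d := 0) hne
  rw [mem_filter] at hmem
  exact hmem.2

noncomputable def coJ (c : Fin (s + 2) ↪o Fin N) (d : Fin s ↪o Fin N) : ℕ :=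
  leastUpto (univ.filter fun t : Fin s => c ⟨t, by have := t.isLt; omega⟩ < d t) s

lemma coJ_le (c : Fin (s + 2) ↪o Fin N) (d : Fin s ↪o Fin N) : coJ c d ≤ s := by
  unfold coJ leastUpto
  split_ifs with h
  · exact le_of_lt (Fin.isLt _)
  · exact le_refl s

lemma coJ_min (c : Fin (s + 2) ↪o Fin N) (d : Fin s ↪o Fin N) :
    ∀ t : Fin s, (t : ℕ) < coJ c d → ¬ (c ⟨t, by have := t.isLt; omega⟩ < d t) := by
  intro t ht
  have h2 := leastUpto_not_mem t ht
  rw [mem_filter] at h2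
  push_neg at h2
  exact not_lt.2 (h2 (mem_univ t))

lemma coJ_vio (c : Fin (s + 2) ↪o Fin N) (d : Fin s ↪o Fin N) (h : coJ c d < s) :
    c ⟨coJ c d, by omega⟩ < d ⟨coJ c d, h⟩ := by
  by_cases hne : (univ.filter fun t : Fin s => c ⟨t, by have := t.isLt; omega⟩ < d t).Nonempty
  · obtain ⟨hlt, hmem⟩ := leastUpto_mem (d := s) hne
    rw [mem_filter] at hmem
    exact hmem.2
  · exfalso
    have : coJ c d = s := leastUpto_eq_dflt (fun t ht => hne ⟨t, ht⟩)
    omega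

lemma spA_congr (c : Fin (s + 2) ↪o Fin N) (d : Fin s ↪o Fin N) {j j' : ℕ} (h : j = j')
    (hj : j ≤ s) (hj' : j' ≤ s) : spA c d j hj = spA c d j' hj' := by subst h; rfl

lemma spB_congr (c : Fin (s + 2) ↪o Fin N) (d : Fin s ↪o Fin N) {j j' : ℕ} (h : j = j')
    (hj : j ≤ s) (hj' : j' ≤ s) : spB c d j hj = spB c d j' hj' := by subst h; rfl

lemma spC_congr (a b : Fin (s + 1) ↪o Fin N) {j j' : ℕ} (h : j = j')
    (hj : j ≤ s) (hj' : j' ≤ s) : spC a b j hj = spC a b j' hj' := by subst h; rfl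

lemma spD_congr (a b : Fin (s + 1) ↪o Fin N) {j j' : ℕ} (h : j = j')
    (hj : j ≤ s) (hj' : j' ≤ s) : spD a b j hj = spD a b j' hj' := by subst h; rfl

lemma bad_spAB (c : Fin (s + 2) ↪o Fin N) (d : Fin s ↪o Fin N) :
    ¬ ∀ t : Fin (s + 1),
      spA c d (coJ c d) (coJ_le c d) t ≤ spB c d (coJ c d) (coJ_le c d) t := by
  intro hall
  have h := hall ⟨coJ c d, by have := coJ_le c d; omega⟩
  unfold spA spB at h
  rw [dif_neg (lt_irrefl _), dif_pos (le_refl _)] at h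
  exact absurd h (not_le.2 (emb_lt_emb c (by omega)))

lemma spA_spCD (a b : Fin (s + 1) ↪o Fin N) (j : ℕ) (hj : j ≤ s) (hvio : b ⟨j, by omega⟩ < a ⟨j, by omega⟩)
    (hmin : ∀ t : Fin (s + 1), (t : ℕ) < j → a t ≤ b t) :
    spA (OrderEmbedding.ofStrictMono _ (spC_sm a b j hj hvio))
      (OrderEmbedding.ofStrictMono _ (spD_sm a b j hj hmin)) j hj = ⇑a := by
  funext t
  show spA _ _ j hj t = a t
  unfold spA
  split_ifs with h1
  · show spD a b j hj ⟨(t : ℕ), _⟩ = a t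
    unfold spD
    rw [dif_pos (show (((⟨(t : ℕ), by omega⟩ : Fin s)) : ℕ) < j from h1)]
  · show spC a b j hj ⟨(t : ℕ) + 1, _⟩ = a t
    unfold spC
    rw [dif_neg (show ¬ (((⟨(t : ℕ) + 1, by have := t.isLt; omega⟩ : Fin (s + 2))) : ℕ) ≤ j by simp; omega)]
    exact congrArg a (Fin.ext (by simp))

lemma spB_spCD (a b : Fin (s + 1) ↪o Fin N) (j : ℕ) (hj : j ≤ s) (hvio : b ⟨j, by omega⟩ < a ⟨j, by omega⟩)
    (hmin : ∀ t : Fin (s + 1), (t : ℕ) < j → a t ≤ b t) :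
    spB (OrderEmbedding.ofStrictMono _ (spC_sm a b j hj hvio))
      (OrderEmbedding.ofStrictMono _ (spD_sm a b j hj hmin)) j hj = ⇑b := by
  funext t
  show spB _ _ j hj t = b t
  unfold spB
  split_ifs with h1
  · show spC a b j hj ⟨(t : ℕ), _⟩ = b t
    unfold spC
    rw [dif_pos (show (((⟨(t : ℕ), by have := t.isLt; omega⟩ : Fin (s + 2))) : ℕ) ≤ j from h1)]
  · show spD a b j hj ⟨(t : ℕ) - 1, _⟩ = b t
    unfold spD
    rw [dif_neg (show ¬ (((⟨(t : ℕ) - 1, by have := t.isLt; omega⟩ : Fin s)) : ℕ) < j by simp; omega)]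
    exact congrArg b (Fin.ext (by simp; omega))

lemma spC_spAB (c : Fin (s + 2) ↪o Fin N) (d : Fin s ↪o Fin N) (j : ℕ) (hj : j ≤ s) (hmin : ∀ t : Fin s, (t : ℕ) < j → ¬ (c ⟨t, by have := t.isLt; omega⟩ < d t))
    (hvio : ∀ h : j < s, c ⟨j, by omega⟩ < d ⟨j, h⟩) :
    spC (OrderEmbedding.ofStrictMono _ (spA_sm c d j hj hmin))
      (OrderEmbedding.ofStrictMono _ (spB_sm c d j hj hvio)) j hj = ⇑c := by
  funext t
  show spC _ _ j hj t = c t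
  unfold spC
  split_ifs with h1
  · show spB c d j hj ⟨(t : ℕ), _⟩ = c t
    unfold spB
    rw [dif_pos (show (((⟨(t : ℕ), by omega⟩ : Fin (s + 1))) : ℕ) ≤ j from h1)]
  · show spA c d j hj ⟨(t : ℕ) - 1, _⟩ = c t
    unfold spA
    rw [dif_neg (show ¬ (((⟨(t : ℕ) - 1, by have := t.isLt; omega⟩ : Fin (s + 1))) : ℕ) < j by simp; omega)]
    exact congrArg c (Fin.ext (by simp; omega))

lemma spD_spAB (c : Fin (s + 2) ↪o Fin N) (d : Fin s ↪o Fin N) (j : ℕ) (hj : j ≤ s) (hmin : ∀ t : Fin s, (t : ℕ) < j → ¬ (c ⟨t, by have := t.isLt; omega⟩ < d t))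
    (hvio : ∀ h : j < s, c ⟨j, by omega⟩ < d ⟨j, h⟩) :
    spD (OrderEmbedding.ofStrictMono _ (spA_sm c d j hj hmin))
      (OrderEmbedding.ofStrictMono _ (spB_sm c d j hj hvio)) j hj = ⇑d := by
  funext t
  show spD _ _ j hj t = d t
  unfold spD
  split_ifs with h1
  · show spA c d j hj ⟨(t : ℕ), _⟩ = d t
    unfold spA
    rw [dif_pos (show (((⟨(t : ℕ), by have := t.isLt; omega⟩ : Fin (s + 1))) : ℕ) < j from h1)]
  · show spB c d j hj ⟨(t : ℕ) + 1, _⟩ = d t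
    unfold spB
    rw [dif_neg (show ¬ (((⟨(t : ℕ) + 1, by have := t.isLt; omega⟩ : Fin (s + 1))) : ℕ) ≤ j by simp; omega)]
    exact congrArg d (Fin.ext (by simp))

lemma coJ_spCD (a b : Fin (s + 1) ↪o Fin N) (hvio : b ⟨refJ a b, by have := refJ_le a b; omega⟩
      < a ⟨refJ a b, by have := refJ_le a b; omega⟩) :
    coJ (OrderEmbedding.ofStrictMono _ (spC_sm a b (refJ a b) (refJ_le a b) hvio))
      (OrderEmbedding.ofStrictMono _ (spD_sm a b (refJ a b) (refJ_le a b) (refJ_min a b)))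
      = refJ a b := by
  set j := refJ a b with hjdef
  have hjle : j ≤ s := refJ_le a b
  have hmin : ∀ t : Fin s, (t : ℕ) < j →
      ¬ (spC a b j hjle ⟨(t : ℕ), by have := t.isLt; omega⟩ < spD a b j hjle t) := by
    intro t ht
    unfold spC spD
    rw [dif_pos (show (((⟨(t : ℕ), by have := t.isLt; omega⟩ : Fin (s + 2))) : ℕ) ≤ j by simp; omega),
      dif_pos (show ((t : Fin s) : ℕ) < j from ht)]
    exact not_lt.2 (refJ_min a b ⟨(t : ℕ), by have := t.isLt; omega⟩ ht)
  by_cases hjs : j < s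
  · apply leastUpto_eq ⟨j, hjs⟩
    · rw [mem_filter]
      refine ⟨mem_univ _, ?_⟩
      show spC a b j hjle ⟨j, _⟩ < spD a b j hjle ⟨j, hjs⟩
      unfold spC spD
      rw [dif_pos (show (((⟨j, by omega⟩ : Fin (s + 2))) : ℕ) ≤ j from le_refl j),
        dif_neg (show ¬ (((⟨j, hjs⟩ : Fin s)) : ℕ) < j from lt_irrefl j)]
      exact emb_lt_emb b (by omega)
    · intro t ht
      rw [Fin.lt_def] at ht
      have ht' : (t : ℕ) < j := by simpa using ht
      simp only [mem_filter, mem_univ, true_and, not_lt]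
      exact not_lt.1 (hmin t ht')
  · have hjs' : refJ a b = s := by omega
    conv_rhs => rw [hjs']
    unfold coJ
    apply leastUpto_eq_dflt
    intro t
    simp only [mem_filter, mem_univ, true_and, not_lt]
    exact not_lt.1 (hmin t (by have := t.isLt; omega))

lemma refJ_spAB (c : Fin (s + 2) ↪o Fin N) (d : Fin s ↪o Fin N) :
    refJ (OrderEmbedding.ofStrictMono _ (spA_sm c d (coJ c d) (coJ_le c d) (coJ_min c d)))
      (OrderEmbedding.ofStrictMono _ (spB_sm c d (coJ c d) (coJ_le c d) (coJ_vio c d)))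
      = coJ c d := by
  set j := coJ c d with hjdef
  have hjle : j ≤ s := coJ_le c d
  apply leastUpto_eq ⟨j, by omega⟩
  · rw [mem_filter]
    refine ⟨mem_univ _, ?_⟩
    show spB c d j hjle ⟨j, _⟩ < spA c d j hjle ⟨j, _⟩
    unfold spA spB
    rw [dif_pos (show (((⟨j, by omega⟩ : Fin (s + 1))) : ℕ) ≤ j from le_refl j),
      dif_neg (show ¬ (((⟨j, by omega⟩ : Fin (s + 1))) : ℕ) < j from lt_irrefl j)]
    exact emb_lt_emb c (by omega)
  · intro t ht
    rw [Fin.lt_def] at ht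
    have ht' : (t : ℕ) < j := by simpa using ht
    simp only [mem_filter, mem_univ, true_and]
    show ¬ (spB c d j hjle t < spA c d j hjle t)
    unfold spA spB
    rw [dif_pos (show ((t : Fin (s + 1)) : ℕ) ≤ j by omega),
      dif_pos (show ((t : Fin (s + 1)) : ℕ) < j from ht')]
    have h2 := coJ_min c d ⟨(t : ℕ), by omega⟩ ht'
    push_neg at h2
    exact not_lt.2 h2

noncomputable def reflectEquiv (N s : ℕ) :
    {p : (Fin (s + 1) ↪o Fin N) × (Fin (s + 1) ↪o Fin N) // ¬ ∀ t, p.1 t ≤ p.2 t}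
      ≃ (Fin (s + 2) ↪o Fin N) × (Fin s ↪o Fin N) where
  toFun p :=
    (OrderEmbedding.ofStrictMono _
        (spC_sm p.1.1 p.1.2 (refJ p.1.1 p.1.2) (refJ_le _ _) (refJ_vio _ _ p.2)),
     OrderEmbedding.ofStrictMono _
        (spD_sm p.1.1 p.1.2 (refJ p.1.1 p.1.2) (refJ_le _ _) (refJ_min _ _)))
  invFun q :=
    ⟨(OrderEmbedding.ofStrictMono _ (spA_sm q.1 q.2 (coJ q.1 q.2) (coJ_le _ _) (coJ_min _ _)),
      OrderEmbedding.ofStrictMono _ (spB_sm q.1 q.2 (coJ q.1 q.2) (coJ_le _ _) (coJ_vio _ _))),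
     bad_spAB q.1 q.2⟩
  left_inv := by
    rintro ⟨⟨a, b⟩, hbad⟩
    apply Subtype.ext
    dsimp only
    have hJ := coJ_spCD a b (refJ_vio a b hbad)
    apply Prod.ext
    · apply DFunLike.coe_injective
      funext t
      simp only [OrderEmbedding.coe_ofStrictMono]
      unfold spA
      split_ifs with h1
      · rw [hJ] at h1
        simp only [OrderEmbedding.coe_ofStrictMono]
        unfold spD
        rw [dif_pos (show ((⟨(t : ℕ), by have := refJ_le a b; omega⟩ : Fin s) : ℕ)
            < refJ a b from h1)]
      · rw [hJ] at h1
        simp only [OrderEmbedding.coe_ofStrictMono]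
        unfold spC
        rw [dif_neg (show ¬ ((⟨(t : ℕ) + 1, by have := t.isLt; omega⟩ : Fin (s + 2)) : ℕ)
            ≤ refJ a b by simp; omega)]
        exact congrArg a (Fin.ext (by simp))
    · apply DFunLike.coe_injective
      funext t
      simp only [OrderEmbedding.coe_ofStrictMono]
      unfold spB
      split_ifs with h1
      · rw [hJ] at h1
        simp only [OrderEmbedding.coe_ofStrictMono]
        unfold spC
        rw [dif_pos (show ((⟨(t : ℕ), by have := t.isLt; omega⟩ : Fin (s + 2)) : ℕ)
            ≤ refJ a b from h1)]
      · rw [hJ] at h1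
        simp only [OrderEmbedding.coe_ofStrictMono]
        unfold spD
        rw [dif_neg (show ¬ ((⟨(t : ℕ) - 1, by have := t.isLt; omega⟩ : Fin s) : ℕ)
            < refJ a b by simp; omega)]
        exact congrArg b (Fin.ext (by simp; omega))
  right_inv := by
    rintro ⟨c, d⟩
    dsimp only
    have hJ := refJ_spAB c d
    apply Prod.ext
    · apply DFunLike.coe_injective
      funext t
      simp only [OrderEmbedding.coe_ofStrictMono]
      unfold spC
      split_ifs with h1
      · rw [hJ] at h1
        simp only [OrderEmbedding.coe_ofStrictMono]
        unfold spB
        rw [dif_pos (show ((⟨(t : ℕ), by have := coJ_le c d; omega⟩ : Fin (s + 1)) : ℕ)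
            ≤ coJ c d from h1)]
      · rw [hJ] at h1
        simp only [OrderEmbedding.coe_ofStrictMono]
        unfold spA
        rw [dif_neg (show ¬ ((⟨(t : ℕ) - 1, by have := t.isLt; omega⟩ : Fin (s + 1)) : ℕ)
            < coJ c d by simp; omega)]
        exact congrArg c (Fin.ext (by simp; omega))
    · apply DFunLike.coe_injective
      funext t
      simp only [OrderEmbedding.coe_ofStrictMono]
      unfold spD
      split_ifs with h1
      · rw [hJ] at h1
        simp only [OrderEmbedding.coe_ofStrictMono]
        unfold spA
        rw [dif_pos (show ((⟨(t : ℕ), by have := t.isLt; omega⟩ : Fin (s + 1)) : ℕ)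
            < coJ c d from h1)]
      · rw [hJ] at h1
        simp only [OrderEmbedding.coe_ofStrictMono]
        unfold spB
        rw [dif_neg (show ¬ ((⟨(t : ℕ) + 1, by have := t.isLt; omega⟩ : Fin (s + 1)) : ℕ)
            ≤ coJ c d by simp; omega)]
        exact congrArg d (Fin.ext (by simp))

end Reflect

/-! ### Part D: counting and arithmetic -/

section Count
variable {N r : ℕ}

instance : Finite (Fin r ↪o Fin N) :=
  Finite.of_injective (fun e => (e : Fin r → Fin N)) DFunLike.coe_injective

noncomputable def embEquivFinset (N r : ℕ) :
    (Fin r ↪o Fin N) ≃ {A : Finset (Fin N) // A.card = r} where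
  toFun e := ⟨univ.image e, by
    rw [card_image_of_injective _ e.injective, card_univ, Fintype.card_fin]⟩
  invFun A := A.1.orderEmbOfFin A.2
  left_inv e := (orderEmbOfFin_unique' _ (fun x => mem_image_of_mem _ (mem_univ x))).symm
  right_inv A := Subtype.ext (image_orderEmbOfFin _ _)

lemma card_emb (N r : ℕ) : Nat.card (Fin r ↪o Fin N) = N.choose r := by
  rw [Nat.card_congr (embEquivFinset N r), Nat.card_eq_fintype_card, Fintype.card_finset_len]
  simp

lemma card_dom_pairs (N r : ℕ) :
    Nat.card {p : (Fin r ↪o Fin N) × (Fin r ↪o Fin N) // ∀ t, p.1 t ≤ p.2 t}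
      + Nat.card {p : (Fin r ↪o Fin N) × (Fin r ↪o Fin N) // ¬ ∀ t, p.1 t ≤ p.2 t}
      = N.choose r * N.choose r := by
  classical
  have h := Nat.card_congr
    (Equiv.sumCompl (fun p : (Fin r ↪o Fin N) × (Fin r ↪o Fin N) => ∀ t, p.1 t ≤ p.2 t))
  rw [Nat.card_sum, Nat.card_prod, card_emb] at h
  exact h

lemma card_dom_pairs_zero (N : ℕ) :
    Nat.card {p : (Fin 0 ↪o Fin N) × (Fin 0 ↪o Fin N) // ∀ t, p.1 t ≤ p.2 t} = 1 := by
  have e0 : Fin 0 ↪o Fin N := OrderEmbedding.ofStrictMono (fun t => t.elim0) (fun t => t.elim0)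
  haveI : Unique {p : (Fin 0 ↪o Fin N) × (Fin 0 ↪o Fin N) // ∀ t, p.1 t ≤ p.2 t} :=
    { default := ⟨(e0, e0), fun t => t.elim0⟩
      uniq := by
        rintro ⟨⟨u, v⟩, h⟩
        apply Subtype.ext
        apply Prod.ext
        · apply DFunLike.coe_injective
          funext t
          exact t.elim0
        · apply DFunLike.coe_injective
          funext t
          exact t.elim0 }
  exact Nat.card_unique

lemma card_D_count (N s : ℕ) :
    Nat.card {p : (Fin (s + 1) ↪o Fin N) × (Fin (s + 1) ↪o Fin N) // ∀ t, p.1 t ≤ p.2 t}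
      + N.choose (s + 2) * N.choose s = N.choose (s + 1) * N.choose (s + 1) := by
  have h1 := card_dom_pairs N (s + 1)
  have h2 : Nat.card {p : (Fin (s + 1) ↪o Fin N) × (Fin (s + 1) ↪o Fin N)
      // ¬ ∀ t, p.1 t ≤ p.2 t} = N.choose (s + 2) * N.choose s := by
    rw [Nat.card_congr (reflectEquiv N s), Nat.card_prod, card_emb, card_emb]
  omega

end Count

lemma narayana_arith {M k x y z : ℕ} (hk : 1 ≤ k) (hkM : k ≤ M)
    (hy : y * k = x * (M - k)) (hz : z * (M - k + 1) = x * (k - 1)) :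
    M * (x * x) = (x + y) * (x + z) + M * (y * z) := by
  obtain ⟨k', rfl⟩ : ∃ k', k = k' + 1 := ⟨k - 1, by omega⟩
  obtain ⟨w, rfl⟩ : ∃ w, M = (k' + 1) + w := ⟨M - (k' + 1), by omega⟩
  rw [show (k' + 1) + w - (k' + 1) = w by omega] at hy hz
  rw [show k' + 1 - 1 = k' by omega] at hz
  apply Nat.eq_of_mul_eq_mul_right (show 0 < (k' + 1) * (w + 1) by positivity)
  zify at hy hz ⊢
  linear_combination (-((x : ℤ) * (k' + 1 + w) + (k' + 1 + w) * x * k'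
      + (1 + (k' + 1 + w)) * ((z : ℤ) * (w + 1) - x * k'))) * hy
    + (-((x : ℤ) * (k' + 1 + w) + (k' + 1 + w) * x * w)) * hz


/-- for `n ≥ 2` and `1 ≤ k ≤ n-1`, the number of connected interval-clique
graphs on `{1,...,n}` with exactly `k` maximal cliques equals
`(1/(n-1))·C(n-1,k)·C(n-1,k-1)` (stated in cleared-denominator form). -/
theorem card_connected_intervalClique_with_k_max_cliques (n k : ℕ) (hn : 2 ≤ n)
    (hk1 : 1 ≤ k) (hkn : k ≤ n - 1) :
    Nat.card {G : SimpleGraph (Fin n) // IntervalClique G ∧ G.Connected ∧ numMaxCliques G = k}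
        * (n - 1)
      = (n - 1).choose k * (n - 1).choose (k - 1) := by

  obtain ⟨N, rfl⟩ : ∃ N, n = N + 2 := ⟨n - 2, by omega⟩
  obtain ⟨r, rfl⟩ : ∃ r, k = r + 1 := ⟨k - 1, by omega⟩
  have hrN : r ≤ N := by omega
  rw [card_graphs_eq_card_goodFun (by omega) (r + 1), card_goodFun_eq_card_pairs N r]
  rw [show N + 2 - 1 = N + 1 by omega, show r + 1 - 1 = r by omega]
  rcases r with _ | s
  · rw [card_dom_pairs_zero]
    simp [Nat.choose_one_right]
  · set x := N.choose (s + 1) with hx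
    set y := N.choose (s + 2) with hyd
    set z := N.choose s with hzd
    have hcount := card_D_count N s
    have hy : y * (s + 2) = x * ((N + 1) - (s + 2)) := by
      rw [show (N + 1) - (s + 2) = N - (s + 1) by omega]
      exact Nat.choose_succ_right_eq N (s + 1)
    have hz : z * ((N + 1) - (s + 2) + 1) = x * ((s + 2) - 1) := by
      rw [show (N + 1) - (s + 2) + 1 = N - s by omega, show (s + 2) - 1 = s + 1 by omega]
      exact (Nat.choose_succ_right_eq N s).symm
    have harith := narayana_arith (M := N + 1) (k := s + 2) (x := x) (y := y) (z := z)
      (by omega) (by omega) hy hz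
    have hpas1 : (N + 1).choose (s + 2) = x + y := by
      rw [Nat.choose_succ_succ]
    have hpas2 : (N + 1).choose (s + 1) = x + z := by
      rw [Nat.choose_succ_succ, add_comm]
    rw [hpas1, hpas2]
    have h9 : Nat.card {p : (Fin (s + 1) ↪o Fin N) × (Fin (s + 1) ↪o Fin N)
          // ∀ t, p.1 t ≤ p.2 t} * (N + 1) + (N + 1) * (y * z)
        = (x + y) * (x + z) + (N + 1) * (y * z) := by
      calc Nat.card {p : (Fin (s + 1) ↪o Fin N) × (Fin (s + 1) ↪o Fin N)
            // ∀ t, p.1 t ≤ p.2 t} * (N + 1) + (N + 1) * (y * z)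
          = (N + 1) * (Nat.card {p : (Fin (s + 1) ↪o Fin N) × (Fin (s + 1) ↪o Fin N)
            // ∀ t, p.1 t ≤ p.2 t} + y * z) := by ring
        _ = (N + 1) * (x * x) := by rw [hcount]
        _ = (x + y) * (x + z) + (N + 1) * (y * z) := harith
    exact Nat.add_right_cancel h9
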